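/- Let G ≤ Aut(T) be self-similar and fractal (respectively, self-similar and strongly fractal), and let s ≥ 1. Then: (i) the group B = Bas_s(G) is fractal (respectively, strongly fractal); and (ii) for every b ∈ B there exists an element c in the stabiliser st_B(0) of the vertex 0 (respectively, in St_B(1)) such that c|_0 = b and c|_x ∈ β_{s−1}(G) for all x ∈ {1,…,m−1}. -/

import Mathlib

/-!
Groups of automorphisms of the `m`-regular rooted tree, encoded via portraits:
an automorphism is determined by the family of its labels (local actions)
`label : List (Fin m) → Equiv.Perm (Fin m)`.
-/

namespace Basilica

/-- An automorphism of the `m`-regular rooted tree, given by its portrait. -/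
structure TreeAut (m : ℕ) where
  label : List (Fin m) → Equiv.Perm (Fin m)

namespace TreeAut

variable {m : ℕ}

lemma ext_label {a b : TreeAut m} (h : ∀ u, a.label u = b.label u) : a = b := by
  cases a
  cases b
  simp only [mk.injEq]
  exact funext h

/-- The section of an automorphism at a vertex. -/
def sec (a : TreeAut m) (v : List (Fin m)) : TreeAut m := ⟨fun u => a.label (v ++ u)⟩

@[simp] lemma sec_label (a : TreeAut m) (v u : List (Fin m)) :
    (a.sec v).label u = a.label (v ++ u) := rfl

@[simp] lemma sec_nil (a : TreeAut m) : a.sec [] = a := rfl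

lemma sec_sec (a : TreeAut m) (v w : List (Fin m)) : (a.sec v).sec w = a.sec (v ++ w) :=
  ext_label fun u => by simp [List.append_assoc]

/-- The action of a tree automorphism on the vertices (finite words). -/
def apply : TreeAut m → List (Fin m) → List (Fin m)
  | _, [] => []
  | a, x :: u => a.label [] x :: (a.sec [x]).apply u

/-- The inverse action of a tree automorphism on the vertices. -/
def invApply : TreeAut m → List (Fin m) → List (Fin m)
  | _, [] => []
  | a, x :: u => (a.label [])⁻¹ x :: (a.sec [(a.label [])⁻¹ x]).invApply u

instance : One (TreeAut m) := ⟨⟨fun _ => 1⟩⟩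
instance : Mul (TreeAut m) := ⟨fun a b => ⟨fun u => a.label (b.apply u) * b.label u⟩⟩
instance : Inv (TreeAut m) := ⟨fun a => ⟨fun u => (a.label (a.invApply u))⁻¹⟩⟩

@[simp] lemma one_label (u : List (Fin m)) : (1 : TreeAut m).label u = 1 := rfl

@[simp] lemma mul_label (a b : TreeAut m) (u : List (Fin m)) :
    (a * b).label u = a.label (b.apply u) * b.label u := rfl

@[simp] lemma inv_label (a : TreeAut m) (u : List (Fin m)) :
    a⁻¹.label u = (a.label (a.invApply u))⁻¹ := rfl

@[simp] lemma one_sec (v : List (Fin m)) : (1 : TreeAut m).sec v = 1 := rfl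

@[simp] lemma apply_nil (a : TreeAut m) : a.apply [] = [] := rfl

lemma apply_cons (a : TreeAut m) (x : Fin m) (u : List (Fin m)) :
    a.apply (x :: u) = a.label [] x :: (a.sec [x]).apply u := rfl

@[simp] lemma one_apply (u : List (Fin m)) : (1 : TreeAut m).apply u = u := by
  induction u with
  | nil => rfl
  | cons x u ih => simp [apply_cons, ih]

lemma apply_append (a : TreeAut m) (v u : List (Fin m)) :
    a.apply (v ++ u) = a.apply v ++ (a.sec v).apply u := by
  induction v generalizing a with
  | nil => simp
  | cons x v ih =>
      simp only [List.cons_append, apply_cons, ih, sec_sec, List.singleton_append,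
        List.nil_append]

lemma mul_sec (a b : TreeAut m) (v : List (Fin m)) :
    (a * b).sec v = a.sec (b.apply v) * b.sec v :=
  ext_label fun u => by simp [apply_append]

lemma mul_apply (a b : TreeAut m) (u : List (Fin m)) :
    (a * b).apply u = a.apply (b.apply u) := by
  induction u generalizing a b with
  | nil => rfl
  | cons x u ih =>
      rw [apply_cons, mul_sec, ih]
      simp [apply_cons, Equiv.Perm.mul_apply]

lemma invApply_apply (a : TreeAut m) (u : List (Fin m)) : a.invApply (a.apply u) = u := by
  induction u generalizing a with
  | nil => rfl
  | cons x u ih => simp [apply_cons, invApply, ih]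

lemma apply_invApply (a : TreeAut m) (u : List (Fin m)) : a.apply (a.invApply u) = u := by
  induction u generalizing a with
  | nil => rfl
  | cons x u ih => simp [invApply, apply_cons, ih]

instance : Group (TreeAut m) where
  mul_assoc a b c := ext_label fun u => by simp [mul_apply, mul_assoc]
  one_mul a := ext_label fun u => by simp
  mul_one a := ext_label fun u => by simp
  inv_mul_cancel a := ext_label fun u => by simp [invApply_apply]

lemma apply_injective (a : TreeAut m) : Function.Injective a.apply := by
  intro x y h
  have hx := invApply_apply a x
  rw [h, invApply_apply] at hx
  exact hx.symm

@[simp] lemma apply_length (a : TreeAut m) (u : List (Fin m)) :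
    (a.apply u).length = u.length := by
  induction u generalizing a with
  | nil => rfl
  | cons x u ih => simp [apply_cons, ih]

/-- `cons ρ f` is `ρ · ψ₁⁻¹(f 0, …, f (m-1))`: the automorphism with root label `ρ`
and first-layer sections `f x`. -/
def cons (ρ : Equiv.Perm (Fin m)) (f : Fin m → TreeAut m) : TreeAut m :=
  ⟨fun u =>
    match u with
    | [] => ρ
    | x :: v => (f x).label v⟩

end TreeAut

variable {m : ℕ}

/-- The `n`-th layer stabiliser `St_G(n)` of a group `G` of tree automorphisms. -/
def layerStab (G : Subgroup (TreeAut m)) (n : ℕ) : Subgroup (TreeAut m) where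
  carrier := {g | g ∈ G ∧ ∀ u : List (Fin m), u.length = n → g.apply u = u}
  one_mem' := ⟨G.one_mem, fun u _ => TreeAut.one_apply u⟩
  mul_mem' := by
    rintro a b ⟨haG, ha⟩ ⟨hbG, hb⟩
    refine ⟨G.mul_mem haG hbG, fun u hu => ?_⟩
    rw [TreeAut.mul_apply, hb u hu, ha u hu]
  inv_mem' := by
    rintro a ⟨haG, ha⟩
    refine ⟨G.inv_mem haG, fun u hu => ?_⟩
    apply TreeAut.apply_injective a
    rw [← TreeAut.mul_apply, mul_inv_cancel, TreeAut.one_apply, ha u hu]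

/-- A group of tree automorphisms acts spherically transitively if it acts
transitively on every layer. -/
def SphericallyTransitive (G : Subgroup (TreeAut m)) : Prop :=
  ∀ u v : List (Fin m), u.length = v.length → ∃ g ∈ G, g.apply u = v

/-- A group of tree automorphisms is self-similar if it is closed under sections. -/
def SelfSimilar (G : Subgroup (TreeAut m)) : Prop :=
  ∀ g ∈ G, ∀ v : List (Fin m), g.sec v ∈ G

/-- A spherically transitive group is fractal if `st_G(u)|_u = G` for all vertices `u`. -/
def Fractal (G : Subgroup (TreeAut m)) : Prop :=
  SphericallyTransitive G ∧
    ∀ u : List (Fin m),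
      {h : TreeAut m | ∃ g ∈ G, g.apply u = u ∧ g.sec u = h} = (G : Set (TreeAut m))

/-- A spherically transitive group is strongly fractal if `St_G(1)|_x = G` for all `x ∈ X`. -/
def StronglyFractal (G : Subgroup (TreeAut m)) : Prop :=
  SphericallyTransitive G ∧
    ∀ x : Fin m,
      {h : TreeAut m | ∃ g ∈ layerStab G 1, g.sec [x] = h} = (G : Set (TreeAut m))

/-- A spherically transitive group is very strongly fractal if
`St_G(n+1)|_x = St_G(n)` for all `n` and `x ∈ X`. -/
def VeryStronglyFractal (G : Subgroup (TreeAut m)) : Prop :=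
  SphericallyTransitive G ∧
    ∀ (n : ℕ) (x : Fin m),
      {h : TreeAut m | ∃ g ∈ layerStab G (n + 1), g.sec [x] = h}
        = (layerStab G n : Set (TreeAut m))

/-- A group of tree automorphisms is contracting if it has a finite nucleus. -/
def Contracting (G : Subgroup (TreeAut m)) : Prop :=
  ∃ N : Set (TreeAut m), N.Finite ∧ N ⊆ (G : Set (TreeAut m)) ∧
    ∀ g ∈ G, ∃ k : ℕ, ∀ v : List (Fin m), k < v.length → g.sec v ∈ N

/-- A tree automorphism is finite-state if it has finitely many distinct sections. -/
def FiniteState (f : TreeAut m) : Prop :=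
  {h : TreeAut m | ∃ u : List (Fin m), f.sec u = h}.Finite

/-- A tree automorphism is bounded if the number of nontrivial sections at the
`n`-th layer is bounded uniformly in `n`. -/
def BoundedAut (f : TreeAut m) : Prop :=
  ∃ C : ℕ, ∀ n : ℕ, {u : List (Fin m) | u.length = n ∧ f.sec u ≠ 1}.ncard ≤ C

/-- The `n`-th rigid layer stabiliser: the subgroup generated by the rigid vertex
stabilisers of the vertices of the `n`-th layer. -/
def rigidLayerStab (G : Subgroup (TreeAut m)) (n : ℕ) : Subgroup (TreeAut m) :=
  Subgroup.closure {g | g ∈ G ∧ ∃ v : List (Fin m), v.length = n ∧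
    ∀ u : List (Fin m), ¬ v <+: u → g.apply u = u}

/-- A weakly branch group: spherically transitive with nontrivial rigid layer stabilisers. -/
def WeaklyBranch (G : Subgroup (TreeAut m)) : Prop :=
  SphericallyTransitive G ∧ ∀ n : ℕ, rigidLayerStab G n ≠ ⊥

/-- `H` is weakly regular branch over `K ≤ H` if `ψ₁(St_K(1)) ⊇ K × ⋯ × K`. -/
def WeaklyRegularBranchOver (H K : Subgroup (TreeAut m)) : Prop :=
  K ≤ H ∧ ∀ f : Fin m → TreeAut m, (∀ x, f x ∈ K) → TreeAut.cons 1 f ∈ K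

/-- The portrait of the `i`-th Basilica monomorphism `β^s_i` applied to `g`,
computed by recursion over vertices. -/
def betaLabel [NeZero m] (s : ℕ) : List (Fin m) → ℕ → TreeAut m → Equiv.Perm (Fin m)
  | [], i, g => if i = 0 then g.label [] else 1
  | x :: u, i, g =>
      if i = 0 then betaLabel s u (s - 1) (g.sec [x])
      else if x = 0 then betaLabel s u (i - 1) g else 1

/-- The Basilica monomorphism `β^s_i : Aut(T) → Aut(T)`, satisfying
`β_i(g) = ψ₁⁻¹(β_{i-1}(g), 1, …, 1)` for `1 ≤ i ≤ s-1` and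
`β_0(g) = g|^ε · ψ₁⁻¹(β_{s-1}(g|_0), …, β_{s-1}(g|_{m-1}))`. -/
def betaAut [NeZero m] (s i : ℕ) (g : TreeAut m) : TreeAut m := ⟨fun u => betaLabel s u i g⟩

/-- The `s`-th Basilica group of `G`. -/
def basilica [NeZero m] (s : ℕ) (G : Subgroup (TreeAut m)) : Subgroup (TreeAut m) :=
  Subgroup.closure {b | ∃ g ∈ G, ∃ i < s, b = betaAut s i g}

/-- The subgroup `S_i = ⟨β_j(G) : j ≠ i⟩` of the `s`-th Basilica group. -/
def Ssub [NeZero m] (s i : ℕ) (G : Subgroup (TreeAut m)) : Subgroup (TreeAut m) :=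
  Subgroup.closure {b | ∃ g ∈ G, ∃ j < s, j ≠ i ∧ b = betaAut s j g}

/-- The normal closure `N_i` of `S_i` in the `s`-th Basilica group of `G`. -/
def Nsub [NeZero m] (s i : ℕ) (G : Subgroup (TreeAut m)) : Subgroup (TreeAut m) :=
  Subgroup.closure {x | ∃ b ∈ basilica s G, ∃ y ∈ Ssub s i G, x = b * y * b⁻¹}

/-- The `i`-th splitting kernel `K_i = β_i⁻¹(β_i(G) ∩ N_i)` of `G`, as a set. -/
def Kset [NeZero m] (s i : ℕ) (G : Subgroup (TreeAut m)) : Set (TreeAut m) :=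
  {g | g ∈ G ∧ betaAut s i g ∈ Nsub s i G}

/-- The portrait of the monomorphism `π_i` (for the `d`-fold diagonal construction). -/
def piLabel (d : ℕ) : List (Fin m) → ℕ → TreeAut m → Equiv.Perm (Fin m)
  | [], i, g => if i = 0 then g.label [] else 1
  | x :: u, i, g =>
      if i = 0 then piLabel d u (d - 1) (g.sec [x])
      else piLabel d u (i - 1) g

/-- The monomorphism `π_i : Aut(T) → Aut(T)`, satisfying
`π_0(g) = g|^ε · ψ₁⁻¹(π_{d-1}(g|_0), …, π_{d-1}(g|_{m-1}))` and
`π_i(g) = ψ₁⁻¹(π_{i-1}(g), …, π_{i-1}(g))` for `1 ≤ i ≤ d-1`. -/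
def piAut (d i : ℕ) (g : TreeAut m) : TreeAut m := ⟨fun u => piLabel d u i g⟩

/-- The generator of the `m`-adic odometer: `a = σ · ψ₁⁻¹(a, 1, …, 1)` with
`σ = (0 1 … m-1)`. -/
def odometer (m : ℕ) [NeZero m] : TreeAut m :=
  ⟨fun u => if ∀ x ∈ u, x = 0 then finRotate m else 1⟩

/-- The group `O_m^d = D_d(O_m) = ⟨π_i(a) : 0 ≤ i ≤ d-1⟩`. -/
def OdPow (m d : ℕ) [NeZero m] : Subgroup (TreeAut m) :=
  Subgroup.closure {x | ∃ i < d, x = piAut d i (odometer m)}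

/-- The group `Γ` of all automorphisms all of whose labels are powers of the
cycle `σ = (0 1 … m-1)`. -/
def Gamma (m : ℕ) : Subgroup (TreeAut m) where
  carrier := {g | ∀ u : List (Fin m), g.label u ∈ Subgroup.zpowers (finRotate m)}
  one_mem' := by
    intro u
    rw [TreeAut.one_label]
    exact one_mem _
  mul_mem' := by
    intro a b ha hb u
    rw [TreeAut.mul_label]
    exact mul_mem (ha _) (hb _)
  inv_mem' := by
    intro a ha u
    rw [TreeAut.inv_label]
    exact inv_mem (ha _)

/-- The Hausdorff dimension of `G ≤ Γ` relative to `Γ`. -/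
noncomputable def hdim (m : ℕ) (G : Subgroup (TreeAut m)) : ℝ :=
  Filter.liminf (fun n : ℕ =>
    Real.logb m ((layerStab G n).relIndex G) /
      Real.logb m ((layerStab (Gamma m) n).relIndex (Gamma m))) Filter.atTop

/-- The series of obstructions `o_G(n) = m·log_m|L_G(n-1)| - log_m|L_G(n)|` (for `n ≥ 1`),
where `L_G(n) = St_G(n)/St_G(n+1)`. -/
noncomputable def obstruction (m : ℕ) (G : Subgroup (TreeAut m)) (n : ℕ) : ℝ :=
  m * Real.logb m ((layerStab G n).relIndex (layerStab G (n - 1)))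
    - Real.logb m ((layerStab G (n + 1)).relIndex (layerStab G n))

/-- The permutation group induced by `G` on the first layer acts regularly on `X`. -/
def RegularRootAction (G : Subgroup (TreeAut m)) : Prop :=
  (∀ x y : Fin m, ∃ g ∈ G, g.label [] x = y) ∧
    ∀ g ∈ G, ∀ x : Fin m, g.label [] x = x → g.label [] = 1


/-! ### Auxiliary lemmas -/

namespace TreeAut

variable {m : ℕ}

lemma apply_singleton (a : TreeAut m) (x : Fin m) : a.apply [x] = [a.label [] x] := rfl

lemma apply_inv_apply (a : TreeAut m) (v : List (Fin m)) : a.apply (a⁻¹.apply v) = v := by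
  rw [← mul_apply, mul_inv_cancel, one_apply]

lemma inv_sec' (a : TreeAut m) (v : List (Fin m)) :
    a⁻¹.sec v = (a.sec (a⁻¹.apply v))⁻¹ := by
  have h := mul_sec a a⁻¹ v
  rw [mul_inv_cancel, one_sec] at h
  exact (inv_eq_of_mul_eq_one_right h.symm).symm

lemma label_nil_zero_of_apply {a : TreeAut m} [NeZero m]
    (h : a.apply [(0 : Fin m)] = [0]) : a.label [] 0 = 0 := by
  rw [apply_singleton] at h
  simpa using h

lemma label_nil_ne_zero {a : TreeAut m} [NeZero m]
    (h : a.apply [(0 : Fin m)] = [0]) {x : Fin m} (hx : x ≠ 0) : a.label [] x ≠ 0 := by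
  intro hx0
  exact hx ((a.label []).injective (hx0.trans (label_nil_zero_of_apply h).symm))

end TreeAut

section BetaLemmas

variable {m : ℕ} [NeZero m]

@[simp] lemma betaAut_label (s i : ℕ) (g : TreeAut m) (u : List (Fin m)) :
    (betaAut s i g).label u = betaLabel s u i g := rfl

lemma betaLabel_nil (s i : ℕ) (g : TreeAut m) :
    betaLabel s ([] : List (Fin m)) i g = if i = 0 then g.label [] else 1 := rfl

lemma betaLabel_cons (s i : ℕ) (g : TreeAut m) (x : Fin m) (u : List (Fin m)) :
    betaLabel s (x :: u) i g =
      if i = 0 then betaLabel s u (s - 1) (g.sec [x])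
      else if x = 0 then betaLabel s u (i - 1) g else 1 := rfl

lemma betaAut_label_nil_zero (s : ℕ) (g : TreeAut m) :
    (betaAut s 0 g).label [] = g.label [] := rfl

lemma betaAut_label_nil_ne (s i : ℕ) (hi : i ≠ 0) (g : TreeAut m) :
    (betaAut s i g).label [] = 1 := by
  simp [betaAut_label, betaLabel_nil, hi]

lemma betaAut_sec_zero (s : ℕ) (g : TreeAut m) (x : Fin m) :
    (betaAut s 0 g).sec [x] = betaAut s (s - 1) (g.sec [x]) :=
  TreeAut.ext_label fun u => by
    simp [TreeAut.sec_label, betaAut_label, betaLabel_cons]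

lemma betaAut_sec_ne_zero (s i : ℕ) (hi : i ≠ 0) (g : TreeAut m) :
    (betaAut s i g).sec [(0 : Fin m)] = betaAut s (i - 1) g :=
  TreeAut.ext_label fun u => by
    simp [TreeAut.sec_label, betaAut_label, betaLabel_cons, hi]

lemma betaAut_sec_ne_ne (s i : ℕ) (hi : i ≠ 0) (g : TreeAut m) {x : Fin m} (hx : x ≠ 0) :
    (betaAut s i g).sec [x] = 1 :=
  TreeAut.ext_label fun u => by
    simp [TreeAut.sec_label, betaAut_label, betaLabel_cons, hi, hx]

lemma betaAut_one (s i : ℕ) : betaAut s i (1 : TreeAut m) = 1 := by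
  apply TreeAut.ext_label
  intro u
  induction u generalizing i with
  | nil => simp [betaAut_label, betaLabel_nil]
  | cons x u ih =>
      simp only [betaAut_label, betaLabel_cons, TreeAut.one_sec] at *
      split
      · exact ih (s - 1)
      · split
        · exact ih (i - 1)
        · rfl

lemma betaAut_apply_cons (s i : ℕ) (g : TreeAut m) (x : Fin m) (u : List (Fin m)) :
    (betaAut s i g).apply (x :: u) =
      if i = 0 then g.label [] x :: (betaAut s (s - 1) (g.sec [x])).apply u
      else x :: (if x = 0 then (betaAut s (i - 1) g).apply u else u) := by
  by_cases hi : i = 0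
  · subst hi
    rw [TreeAut.apply_cons, betaAut_sec_zero]
    simp [betaAut_label, betaLabel_nil]
  · rw [TreeAut.apply_cons, betaAut_label_nil_ne s i hi]
    by_cases hx : x = 0
    · subst hx
      rw [betaAut_sec_ne_zero s i hi]
      simp [hi]
    · rw [betaAut_sec_ne_ne s i hi g hx]
      simp [hi, hx]

lemma betaAut_mul (s : ℕ) (i : ℕ) (g h : TreeAut m) :
    betaAut s i (g * h) = betaAut s i g * betaAut s i h := by
  apply TreeAut.ext_label
  intro u
  induction u generalizing i g h with
  | nil =>
      simp only [TreeAut.mul_label, TreeAut.apply_nil, betaAut_label, betaLabel_nil]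
      split <;> simp
  | cons x u ih =>
      rw [TreeAut.mul_label, betaAut_apply_cons]
      by_cases hi : i = 0
      · subst hi
        rw [if_pos rfl]
        have hsecmul : (g * h).sec [x] = g.sec [h.label [] x] * h.sec [x] := by
          rw [TreeAut.mul_sec, TreeAut.apply_singleton]
        show betaLabel s u (s - 1) ((g * h).sec [x]) = _
        rw [hsecmul]
        exact ih (s - 1) _ _
      · rw [if_neg hi]
        by_cases hx : x = 0
        · subst hx
          rw [if_pos rfl, betaAut_label, betaAut_label, betaAut_label,
            betaLabel_cons, betaLabel_cons, betaLabel_cons,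
            if_neg hi, if_neg hi, if_neg hi, if_pos rfl, if_pos rfl, if_pos rfl]
          exact ih (i - 1) g h
        · rw [if_neg hx]
          show betaLabel s ((x : Fin m) :: u) i (g * h) = _
          rw [betaAut_label, betaAut_label, betaLabel_cons, betaLabel_cons, betaLabel_cons,
            if_neg hi, if_neg hi, if_neg hi, if_neg hx, if_neg hx, if_neg hx, one_mul]

lemma betaAut_inv (s i : ℕ) (g : TreeAut m) :
    betaAut s i g⁻¹ = (betaAut s i g)⁻¹ := by
  have := betaAut_mul s i g g⁻¹
  rw [mul_inv_cancel, betaAut_one] at this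
  exact (inv_eq_of_mul_eq_one_right this.symm).symm

lemma betaAut_mem_basilica (s : ℕ) {G : Subgroup (TreeAut m)} {g : TreeAut m}
    (hg : g ∈ G) {i : ℕ} (hi : i < s) : betaAut s i g ∈ basilica s G :=
  Subgroup.subset_closure ⟨g, hg, i, hi, rfl⟩

/-- Level-one sections of elements of the Basilica group lie in the Basilica group. -/
lemma basilica_sec_one {G : Subgroup (TreeAut m)} (hss : SelfSimilar G) {s : ℕ} (hs : 1 ≤ s) :
    ∀ b ∈ basilica s G, ∀ x : Fin m, b.sec [x] ∈ basilica s G := by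
  intro b hb
  refine Subgroup.closure_induction (p := fun b _ => ∀ x : Fin m, b.sec [x] ∈ basilica s G)
    ?_ ?_ ?_ ?_ hb
  · rintro b ⟨g, hg, i, hi, rfl⟩ x
    by_cases hi0 : i = 0
    · subst hi0
      rw [betaAut_sec_zero]
      exact betaAut_mem_basilica s (hss g hg [x]) (Nat.sub_lt (by omega) one_pos)
    · by_cases hx : x = 0
      · subst hx
        rw [betaAut_sec_ne_zero s i hi0]
        exact betaAut_mem_basilica s hg (by omega)
      · rw [betaAut_sec_ne_ne s i hi0 g hx]
        exact one_mem _
  · intro x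
    rw [TreeAut.one_sec]
    exact one_mem _
  · intro a b _ _ ha hb x
    rw [TreeAut.mul_sec, TreeAut.apply_singleton]
    exact mul_mem (ha _) (hb _)
  · intro a _ ha x
    rw [TreeAut.inv_sec', TreeAut.apply_singleton]
    exact inv_mem (ha _)

/-- The Basilica group is self-similar. -/
lemma basilica_selfSimilar {G : Subgroup (TreeAut m)} (hss : SelfSimilar G) {s : ℕ}
    (hs : 1 ≤ s) : SelfSimilar (basilica s G) := by
  intro b hb v
  induction v generalizing b with
  | nil => simpa using hb
  | cons x v ih =>
      have : b.sec (x :: v) = (b.sec [x]).sec v := by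
        rw [TreeAut.sec_sec]
        rfl
      rw [this]
      exact ih _ (basilica_sec_one hss hs b hb x)

/-- The subgroup of automorphisms fixing the vertex `0`. -/
def stabZero (m : ℕ) [NeZero m] : Subgroup (TreeAut m) where
  carrier := {c | c.apply [(0 : Fin m)] = [0]}
  one_mem' := by simp
  mul_mem' := by
    intro a b ha hb
    simp only [Set.mem_setOf_eq] at *
    rw [TreeAut.mul_apply, hb, ha]
  inv_mem' := by
    intro a ha
    simp only [Set.mem_setOf_eq] at *
    apply TreeAut.apply_injective a
    rw [TreeAut.apply_inv_apply, ha]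

@[simp] lemma mem_stabZero {c : TreeAut m} : c ∈ stabZero m ↔ c.apply [(0 : Fin m)] = [0] :=
  Iff.rfl

/-- The key induction: every element of the Basilica group is the `0`-section of an element
of a suitable subgroup `Q`, with all other first-level sections in `β_{s-1}(G)`. -/
lemma basilica_core {G : Subgroup (TreeAut m)} (hss : SelfSimilar G) {s : ℕ} (hs : 1 ≤ s)
    (Q : Subgroup (TreeAut m))
    (hQ0 : ∀ c ∈ Q, c.apply [(0 : Fin m)] = [0])
    (hgen1 : ∀ g ∈ G, ∀ i : ℕ, i + 1 < s → betaAut s (i + 1) g ∈ Q)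
    (hgen0 : ∀ g ∈ G, ∃ g' ∈ G, betaAut s 0 g' ∈ Q ∧ g'.sec [(0 : Fin m)] = g) :
    ∀ b ∈ basilica s G, ∃ c ∈ Q, c.sec [(0 : Fin m)] = b ∧
      ∀ x : Fin m, x ≠ 0 → ∃ g ∈ G, c.sec [x] = betaAut s (s - 1) g := by
  intro b hb
  refine Subgroup.closure_induction
    (p := fun b _ => ∃ c ∈ Q, c.sec [(0 : Fin m)] = b ∧
      ∀ x : Fin m, x ≠ 0 → ∃ g ∈ G, c.sec [x] = betaAut s (s - 1) g) ?_ ?_ ?_ ?_ hb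
  · rintro b ⟨g, hg, i, hi, rfl⟩
    by_cases h : i + 1 < s
    · refine ⟨betaAut s (i + 1) g, hgen1 g hg i h, ?_, ?_⟩
      · rw [betaAut_sec_ne_zero s (i + 1) (Nat.succ_ne_zero i)]
        simp
      · intro x hx
        refine ⟨1, one_mem _, ?_⟩
        rw [betaAut_sec_ne_ne s (i + 1) (Nat.succ_ne_zero i) g hx, betaAut_one]
    · have hieq : i = s - 1 := by omega
      obtain ⟨g', hg', hQg', hsec⟩ := hgen0 g hg
      refine ⟨betaAut s 0 g', hQg', ?_, ?_⟩
      · rw [betaAut_sec_zero, hsec, hieq]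
      · intro x hx
        exact ⟨g'.sec [x], hss g' hg' [x], (betaAut_sec_zero s g' x).symm ▸ rfl⟩
  · refine ⟨1, one_mem _, by simp, fun x hx => ⟨1, one_mem _, ?_⟩⟩
    rw [TreeAut.one_sec, betaAut_one]
  · rintro b1 b2 _ _ ⟨c1, hc1Q, hc10, hc1x⟩ ⟨c2, hc2Q, hc20, hc2x⟩
    refine ⟨c1 * c2, mul_mem hc1Q hc2Q, ?_, ?_⟩
    · rw [TreeAut.mul_sec, hQ0 c2 hc2Q, hc10, hc20]
    · intro x hx
      rw [TreeAut.mul_sec, TreeAut.apply_singleton]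
      obtain ⟨g1, hg1, h1⟩ := hc1x (c2.label [] x) (TreeAut.label_nil_ne_zero (hQ0 c2 hc2Q) hx)
      obtain ⟨g2, hg2, h2⟩ := hc2x x hx
      exact ⟨g1 * g2, mul_mem hg1 hg2, by rw [h1, h2, betaAut_mul]⟩
  · rintro b _ ⟨c, hcQ, hc0, hcx⟩
    have hcinv : c⁻¹.apply [(0 : Fin m)] = [0] := hQ0 c⁻¹ (inv_mem hcQ)
    refine ⟨c⁻¹, inv_mem hcQ, ?_, ?_⟩
    · rw [TreeAut.inv_sec', hcinv, hc0]
    · intro x hx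
      rw [TreeAut.inv_sec', TreeAut.apply_singleton]
      obtain ⟨g, hg, h1⟩ := hcx (c⁻¹.label [] x) (TreeAut.label_nil_ne_zero hcinv hx)
      exact ⟨g⁻¹, inv_mem hg, by rw [h1, betaAut_inv]⟩

/-- First-layer transitivity of the Basilica group. -/
lemma basilica_trans1 {G : Subgroup (TreeAut m)} (hGtr : SphericallyTransitive G) {s : ℕ}
    (hs : 1 ≤ s) (x y : Fin m) : ∃ t ∈ basilica s G, t.apply [x] = [y] := by
  obtain ⟨g, hg, hgxy⟩ := hGtr [x] [y] rfl
  refine ⟨betaAut s 0 g, betaAut_mem_basilica s hg hs, ?_⟩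
  rw [TreeAut.apply_singleton, betaAut_label_nil_zero]
  rw [TreeAut.apply_singleton] at hgxy
  exact hgxy

/-- Conjugation computation: moving a stabiliser of `0` to a stabiliser of `x`. -/
lemma conj_calc {t c0 : TreeAut m} [NeZero m] {x : Fin m}
    (ht : t.apply [(0 : Fin m)] = [x]) (hc : c0.apply [(0 : Fin m)] = [0]) :
    (t * c0 * t⁻¹).apply [x] = [x] ∧
      (t * c0 * t⁻¹).sec [x] = t.sec [0] * c0.sec [0] * (t.sec [0])⁻¹ := by
  have hti : t⁻¹.apply [x] = [(0 : Fin m)] := by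
    apply TreeAut.apply_injective t
    rw [TreeAut.apply_inv_apply, ht]
  constructor
  · rw [TreeAut.mul_apply, TreeAut.mul_apply, hti, hc, ht]
  · rw [TreeAut.mul_sec, TreeAut.mul_sec, hti, hc, TreeAut.inv_sec', hti, mul_assoc]

end BetaLemmas

section Main

variable {m : ℕ} [NeZero m]

lemma layerStab_label_nil {G : Subgroup (TreeAut m)} {g : TreeAut m}
    (hg : g ∈ layerStab G 1) : g.label [] = 1 := by
  apply Equiv.ext
  intro x
  have h := hg.2 [x] rfl
  rw [TreeAut.apply_singleton] at h
  simpa using h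

lemma mem_layerStab_one {G : Subgroup (TreeAut m)} {g : TreeAut m} (hgG : g ∈ G)
    (h : g.label [] = 1) : g ∈ layerStab G 1 := by
  refine ⟨hgG, fun u hu => ?_⟩
  obtain ⟨x, rfl⟩ := List.length_eq_one_iff.mp hu
  rw [TreeAut.apply_singleton, h]
  rfl

lemma betaAut_succ_mem_layerStab {G : Subgroup (TreeAut m)} {s : ℕ} {g : TreeAut m}
    (hg : g ∈ G) {i : ℕ} (h : i + 1 < s) :
    betaAut s (i + 1) g ∈ layerStab (basilica s G) 1 :=
  mem_layerStab_one (betaAut_mem_basilica s hg h)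
    (betaAut_label_nil_ne s (i + 1) (Nat.succ_ne_zero i) g)

/-- The core lemma, instantiated with the stabiliser of the vertex `0`. -/
lemma core_fr {G : Subgroup (TreeAut m)} (hss : SelfSimilar G) {s : ℕ} (hs : 1 ≤ s)
    (hgen0 : ∀ g ∈ G, ∃ g' ∈ G,
      betaAut s 0 g' ∈ basilica s G ⊓ stabZero m ∧ g'.sec [(0 : Fin m)] = g) :
    ∀ b ∈ basilica s G, ∃ c ∈ basilica s G,
      c.apply [(0 : Fin m)] = [0] ∧ c.sec [(0 : Fin m)] = b ∧
      ∀ x : Fin m, x ≠ 0 → ∃ g ∈ G, c.sec [x] = betaAut s (s - 1) g := by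
  intro b hb
  obtain ⟨c, hcQ, h0, hx⟩ := basilica_core hss hs (basilica s G ⊓ stabZero m)
    (fun c hc => (Subgroup.mem_inf.mp hc).2)
    (fun g hg i hi => Subgroup.mem_inf.mpr
      ⟨betaAut_mem_basilica s hg hi, (betaAut_succ_mem_layerStab hg hi).2 [0] rfl⟩)
    hgen0 b hb
  exact ⟨c, (Subgroup.mem_inf.mp hcQ).1, (Subgroup.mem_inf.mp hcQ).2, h0, hx⟩

/-- The core lemma, instantiated with the first layer stabiliser. -/
lemma core_sf {G : Subgroup (TreeAut m)} (hss : SelfSimilar G) {s : ℕ} (hs : 1 ≤ s)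
    (hgen0 : ∀ g ∈ G, ∃ g' ∈ G,
      betaAut s 0 g' ∈ layerStab (basilica s G) 1 ∧ g'.sec [(0 : Fin m)] = g) :
    ∀ b ∈ basilica s G, ∃ c ∈ layerStab (basilica s G) 1,
      c.sec [(0 : Fin m)] = b ∧
      ∀ x : Fin m, x ≠ 0 → ∃ g ∈ G, c.sec [x] = betaAut s (s - 1) g :=
  basilica_core hss hs (layerStab (basilica s G) 1)
    (fun c hc => hc.2 [0] rfl)
    (fun _ hg _ hi => betaAut_succ_mem_layerStab hg hi) hgen0

lemma hgen0_of_fractal {G : Subgroup (TreeAut m)} (hf : Fractal G) {s : ℕ} (hs : 1 ≤ s) :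
    ∀ g ∈ G, ∃ g' ∈ G,
      betaAut s 0 g' ∈ basilica s G ⊓ stabZero m ∧ g'.sec [(0 : Fin m)] = g := by
  intro g hg
  have hgmem : g ∈ (G : Set (TreeAut m)) := hg
  rw [← hf.2 [(0 : Fin m)]] at hgmem
  obtain ⟨g', hg', hap, hse⟩ := hgmem
  refine ⟨g', hg', Subgroup.mem_inf.mpr ⟨betaAut_mem_basilica s hg' (by omega), ?_⟩, hse⟩
  rw [mem_stabZero, TreeAut.apply_singleton, betaAut_label_nil_zero,
    TreeAut.label_nil_zero_of_apply hap]

lemma hgen0_of_strong {G : Subgroup (TreeAut m)} (hf : StronglyFractal G) {s : ℕ}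
    (hs : 1 ≤ s) :
    ∀ g ∈ G, ∃ g' ∈ G,
      betaAut s 0 g' ∈ layerStab (basilica s G) 1 ∧ g'.sec [(0 : Fin m)] = g := by
  intro g hg
  have hgmem : g ∈ (G : Set (TreeAut m)) := hg
  rw [← hf.2 0] at hgmem
  obtain ⟨g', hg', hse⟩ := hgmem
  refine ⟨g', hg'.1,
    mem_layerStab_one (betaAut_mem_basilica s hg'.1 (by omega)) ?_, hse⟩
  rw [betaAut_label_nil_zero]
  exact layerStab_label_nil hg'

/-- Level-one fractality of the Basilica group at every first-layer vertex. -/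
lemma level1_fr {G : Subgroup (TreeAut m)} (hss : SelfSimilar G) {s : ℕ} (hs : 1 ≤ s)
    (hGtr : SphericallyTransitive G)
    (hgen0 : ∀ g ∈ G, ∃ g' ∈ G,
      betaAut s 0 g' ∈ basilica s G ⊓ stabZero m ∧ g'.sec [(0 : Fin m)] = g) :
    ∀ x : Fin m, ∀ b ∈ basilica s G,
      ∃ c ∈ basilica s G, c.apply [x] = [x] ∧ c.sec [x] = b := by
  intro x b hb
  obtain ⟨t, htB, ht⟩ := basilica_trans1 hGtr hs 0 x
  have hts : t.sec [(0 : Fin m)] ∈ basilica s G := basilica_sec_one hss hs t htB 0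
  have hb' : (t.sec [(0 : Fin m)])⁻¹ * b * t.sec [0] ∈ basilica s G :=
    mul_mem (mul_mem (inv_mem hts) hb) hts
  obtain ⟨c0, hc0B, hc0ap, hc0sec, _⟩ := core_fr hss hs hgen0 _ hb'
  obtain ⟨hap, hsec⟩ := conj_calc ht hc0ap
  refine ⟨t * c0 * t⁻¹, mul_mem (mul_mem htB hc0B) (inv_mem htB), hap, ?_⟩
  rw [hsec, hc0sec]
  group

/-- Spherical transitivity of the Basilica group. -/
lemma basilica_sph {G : Subgroup (TreeAut m)} {s : ℕ} (hs : 1 ≤ s)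
    (hGtr : SphericallyTransitive G)
    (hfr1 : ∀ x : Fin m, ∀ b ∈ basilica s G,
      ∃ c ∈ basilica s G, c.apply [x] = [x] ∧ c.sec [x] = b) :
    SphericallyTransitive (basilica s G) := by
  have key : ∀ n : ℕ, ∀ u v : List (Fin m), u.length = n → v.length = n →
      ∃ b ∈ basilica s G, b.apply u = v := by
    intro n
    induction n with
    | zero =>
        intro u v hu hv
        rw [List.length_eq_zero_iff] at hu hv
        subst hu; subst hv
        exact ⟨1, one_mem _, by simp⟩
    | succ n ih =>
        intro u v hu hv
        cases u with
        | nil => simp at hu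
        | cons x u' =>
            cases v with
            | nil => simp at hv
            | cons y v' =>
                obtain ⟨t, htB, ht⟩ := basilica_trans1 hGtr hs x y
                have hty : t.label [] x = y := by
                  rw [TreeAut.apply_singleton] at ht
                  simpa using ht
                have hu' : u'.length = n := by simpa using hu
                have hv' : v'.length = n := by simpa using hv
                obtain ⟨b, hbB, hb⟩ := ih ((t.sec [x]).apply u') v'
                  (by rw [TreeAut.apply_length]; exact hu') hv'
                obtain ⟨c, hcB, hcap, hcsec⟩ := hfr1 y b hbB
                have hcy : c.label [] y = y := by
                  rw [TreeAut.apply_singleton] at hcap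
                  simpa using hcap
                refine ⟨c * t, mul_mem hcB htB, ?_⟩
                rw [TreeAut.mul_apply, TreeAut.apply_cons, hty, TreeAut.apply_cons, hcy,
                  hcsec, hb]
  intro u v h
  exact key u.length u v rfl h.symm

/-- Fractality of the Basilica group at every vertex. -/
lemma basilica_frac_all {G : Subgroup (TreeAut m)} {s : ℕ}
    (hfr1 : ∀ x : Fin m, ∀ b ∈ basilica s G,
      ∃ c ∈ basilica s G, c.apply [x] = [x] ∧ c.sec [x] = b) :
    ∀ u : List (Fin m), ∀ b ∈ basilica s G,
      ∃ g ∈ basilica s G, g.apply u = u ∧ g.sec u = b := by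
  intro u
  induction u with
  | nil => exact fun b hb => ⟨b, hb, by simp, rfl⟩
  | cons x v ih =>
      intro b hb
      obtain ⟨g, hgB, hgap, hgsec⟩ := ih b hb
      obtain ⟨c, hcB, hcap, hcsec⟩ := hfr1 x g hgB
      have hcx : c.label [] x = x := by
        rw [TreeAut.apply_singleton] at hcap
        simpa using hcap
      refine ⟨c, hcB, ?_, ?_⟩
      · rw [TreeAut.apply_cons, hcx, hcsec, hgap]
      · rw [show (x :: v) = [x] ++ v from rfl, ← TreeAut.sec_sec, hcsec, hgsec]

/-- Strong level-one fractality of the Basilica group at every first-layer vertex. -/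
lemma level1_sf {G : Subgroup (TreeAut m)} (hss : SelfSimilar G) {s : ℕ} (hs : 1 ≤ s)
    (hGtr : SphericallyTransitive G)
    (hgen0 : ∀ g ∈ G, ∃ g' ∈ G,
      betaAut s 0 g' ∈ layerStab (basilica s G) 1 ∧ g'.sec [(0 : Fin m)] = g) :
    ∀ x : Fin m, ∀ b ∈ basilica s G,
      ∃ c ∈ layerStab (basilica s G) 1, c.sec [x] = b := by
  intro x b hb
  obtain ⟨t, htB, ht⟩ := basilica_trans1 hGtr hs 0 x
  have hts : t.sec [(0 : Fin m)] ∈ basilica s G := basilica_sec_one hss hs t htB 0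
  have hb' : (t.sec [(0 : Fin m)])⁻¹ * b * t.sec [0] ∈ basilica s G :=
    mul_mem (mul_mem (inv_mem hts) hb) hts
  obtain ⟨c0, hc0St, hc0sec, _⟩ := core_sf hss hs hgen0 _ hb'
  have hc0ap : c0.apply [(0 : Fin m)] = [0] := hc0St.2 [0] rfl
  obtain ⟨_, hsec⟩ := conj_calc ht hc0ap
  refine ⟨t * c0 * t⁻¹, ⟨mul_mem (mul_mem htB hc0St.1) (inv_mem htB), ?_⟩, ?_⟩
  · intro u hu
    obtain ⟨y, rfl⟩ := List.length_eq_one_iff.mp hu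
    rw [TreeAut.mul_apply, TreeAut.mul_apply,
      hc0St.2 (t⁻¹.apply [y]) (by rw [TreeAut.apply_length]; rfl),
      TreeAut.apply_inv_apply]
  · rw [hsec, hc0sec]
    group

end Main

/-- Let `G ≤ Aut(T)` be self-similar and fractal (resp. strongly fractal)
and `s ≥ 1`. Then (i) `B = Bas_s(G)` is fractal (resp. strongly fractal); (ii) for every
`b ∈ B` there is `c ∈ st_B(0)` (resp. `c ∈ St_B(1)`) with `c|_0 = b` and
`c|_x ∈ β_{s-1}(G)` for all `x ∈ {1, …, m-1}`. -/
theorem basilica_fractal {m : ℕ} [NeZero m] (hm : 2 ≤ m)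
    (G : Subgroup (TreeAut m)) (hss : SelfSimilar G)
    (s : ℕ) (hs : 1 ≤ s) :
    (Fractal G →
      Fractal (basilica s G) ∧
      ∀ b ∈ basilica s G, ∃ c ∈ basilica s G,
        c.apply [(0 : Fin m)] = [(0 : Fin m)] ∧ c.sec [(0 : Fin m)] = b ∧
        ∀ x : Fin m, x ≠ 0 → ∃ g ∈ G, c.sec [x] = betaAut s (s - 1) g) ∧
    (StronglyFractal G →
      StronglyFractal (basilica s G) ∧
      ∀ b ∈ basilica s G, ∃ c ∈ layerStab (basilica s G) 1,
        c.sec [(0 : Fin m)] = b ∧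
        ∀ x : Fin m, x ≠ 0 → ∃ g ∈ G, c.sec [x] = betaAut s (s - 1) g) := by
  constructor
  · intro hf
    have hgen0 := hgen0_of_fractal hf hs
    have hfr1 := level1_fr hss hs hf.1 hgen0
    refine ⟨⟨basilica_sph hs hf.1 hfr1, ?_⟩, ?_⟩
    · intro u
      ext h
      simp only [Set.mem_setOf_eq, SetLike.mem_coe]
      constructor
      · rintro ⟨g, hg, _, rfl⟩
        exact basilica_selfSimilar hss hs g hg u
      · intro hb
        obtain ⟨g, hgB, h1, h2⟩ := basilica_frac_all hfr1 u h hb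
        exact ⟨g, hgB, h1, h2⟩
    · intro b hb
      obtain ⟨c, h1, h2, h3, h4⟩ := core_fr hss hs hgen0 b hb
      exact ⟨c, h1, h2, h3, h4⟩
  · intro hf
    have hgen0s := hgen0_of_strong hf hs
    have hgen0 : ∀ g ∈ G, ∃ g' ∈ G,
        betaAut s 0 g' ∈ basilica s G ⊓ stabZero m ∧ g'.sec [(0 : Fin m)] = g := by
      intro g hg
      obtain ⟨g', h1, h2, h3⟩ := hgen0s g hg
      exact ⟨g', h1, Subgroup.mem_inf.mpr ⟨h2.1, h2.2 [0] rfl⟩, h3⟩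
    have hfr1 := level1_fr hss hs hf.1 hgen0
    refine ⟨⟨basilica_sph hs hf.1 hfr1, ?_⟩, ?_⟩
    · intro x
      ext h
      simp only [Set.mem_setOf_eq, SetLike.mem_coe]
      constructor
      · rintro ⟨g, hg, rfl⟩
        exact basilica_sec_one hss hs g hg.1 x
      · intro hb
        exact level1_sf hss hs hf.1 hgen0s x h hb
    · intro b hb
      exact core_sf hss hs hgen0s b hb

end Basilica
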